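/- Let (Π,Γ,α,l) : I → ℝ³ × ℝ³ × ℝ × ℝ be differentiable on an open interval I and solve the reduced spacecraft–rotor equations with non-coincident centers: Π′(t) = Π(t) × Ω(Π(t),l(t)) + g·h·(Γ(t) × χ), Γ′(t) = Γ(t) × Ω(Π(t),l(t)), α′(t) = −(Π₃(t) − l(t))/Ī₃ + l(t)/J₃, l′(t) = 0. Then for every continuously differentiable F : ℝ³ × ℝ³ × ℝ × ℝ → ℝ, the derivative d/dt F(Π(t),Γ(t),α(t),l(t)) equals {F, H}₋(Π(t),Γ(t),α(t),l(t)) for all t ∈ I, where H(Π,Γ,α,l) = (1/2)[Π₁²/Ī₁ + Π₂²/Ī₂ + (Π₃ − l)²/Ī₃ + l²/J₃] + g·h·(Γ · χ) (independent of α). That is, the reduced equations are Hamiltonian with respect to the minus heavy-top Lie–Poisson bracket. -/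

import Mathlib

open Matrix

open Matrix

/-- Gradient in the `Π`-variables of a function on `𝔰𝔢*(3) × ℝ × ℝ* ≅ ℝ³ × ℝ³ × ℝ × ℝ`. -/
noncomputable def gradPi (F : (Fin 3 → ℝ) × (Fin 3 → ℝ) × ℝ × ℝ → ℝ)
    (p : (Fin 3 → ℝ) × (Fin 3 → ℝ) × ℝ × ℝ) : Fin 3 → ℝ :=
  fun i => fderiv ℝ F p (Pi.single i 1, 0, 0, 0)

/-- Gradient in the `Γ`-variables. -/
noncomputable def gradGamma (F : (Fin 3 → ℝ) × (Fin 3 → ℝ) × ℝ × ℝ → ℝ)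
    (p : (Fin 3 → ℝ) × (Fin 3 → ℝ) × ℝ × ℝ) : Fin 3 → ℝ :=
  fun i => fderiv ℝ F p (0, Pi.single i 1, 0, 0)

/-- Partial derivative with respect to `α`. -/
noncomputable def dAlpha (F : (Fin 3 → ℝ) × (Fin 3 → ℝ) × ℝ × ℝ → ℝ)
    (p : (Fin 3 → ℝ) × (Fin 3 → ℝ) × ℝ × ℝ) : ℝ :=
  fderiv ℝ F p (0, 0, 1, 0)

/-- Partial derivative with respect to `l`. -/
noncomputable def dEll (F : (Fin 3 → ℝ) × (Fin 3 → ℝ) × ℝ × ℝ → ℝ)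
    (p : (Fin 3 → ℝ) × (Fin 3 → ℝ) × ℝ × ℝ) : ℝ :=
  fderiv ℝ F p (0, 0, 0, 1)

/-- The minus heavy-top Lie–Poisson bracket on `𝔰𝔢*(3) × ℝ × ℝ*`:
`{F,K}₋ = −Π·(∇_Π F × ∇_Π K) − Γ·(∇_Π F × ∇_Γ K − ∇_Π K × ∇_Γ F)
          + (∂F/∂α)(∂K/∂l) − (∂K/∂α)(∂F/∂l)`. -/
noncomputable def bracket (F K : (Fin 3 → ℝ) × (Fin 3 → ℝ) × ℝ × ℝ → ℝ)
    (p : (Fin 3 → ℝ) × (Fin 3 → ℝ) × ℝ × ℝ) : ℝ :=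
  -(p.1 ⬝ᵥ crossProduct (gradPi F p) (gradPi K p))
    - (p.2.1 ⬝ᵥ (crossProduct (gradPi F p) (gradGamma K p)
        - crossProduct (gradPi K p) (gradGamma F p)))
    + dAlpha F p * dEll K p - dAlpha K p * dEll F p


/-- The body angular velocity `Ω(Π,l) = (Π₁/Ī₁, Π₂/Ī₂, (Π₃ − l)/Ī₃)`. -/
noncomputable def Om (I1 I2 I3 : ℝ) (P : Fin 3 → ℝ) (l : ℝ) : Fin 3 → ℝ :=
  ![P 0 / I1, P 1 / I2, (P 2 - l) / I3]

/-- Reduced Hamiltonian of the spacecraft–rotor system with non-coincident centers,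
viewed as a function of `(Π,Γ,α,l)` (independent of `α`). -/
noncomputable def Ham (I1 I2 I3 J3 g h : ℝ) (χ : Fin 3 → ℝ)
    (p : (Fin 3 → ℝ) × (Fin 3 → ℝ) × ℝ × ℝ) : ℝ :=
  (1/2) * ((p.1 0)^2 / I1 + (p.1 1)^2 / I2 + (p.1 2 - p.2.2.2)^2 / I3
      + p.2.2.2^2 / J3)
    + g * h * (p.2.1 ⬝ᵥ χ)

abbrev EE := (Fin 3 → ℝ) × (Fin 3 → ℝ) × ℝ × ℝ

noncomputable def cP (i : Fin 3) : EE →L[ℝ] ℝ :=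
  (ContinuousLinearMap.proj i).comp (ContinuousLinearMap.fst ℝ (Fin 3 → ℝ) _)
noncomputable def cG (i : Fin 3) : EE →L[ℝ] ℝ :=
  (ContinuousLinearMap.proj i).comp
    ((ContinuousLinearMap.fst ℝ (Fin 3 → ℝ) (ℝ × ℝ)).comp
      (ContinuousLinearMap.snd ℝ (Fin 3 → ℝ) _))
noncomputable def cL : EE →L[ℝ] ℝ :=
  (ContinuousLinearMap.snd ℝ ℝ ℝ).comp
    ((ContinuousLinearMap.snd ℝ (Fin 3 → ℝ) (ℝ × ℝ)).comp
      (ContinuousLinearMap.snd ℝ (Fin 3 → ℝ) _))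

lemma fderiv_Ham_apply (I1 I2 I3 J3 g h : ℝ) (χ : Fin 3 → ℝ) (p : EE) (v : EE) :
    fderiv ℝ (Ham I1 I2 I3 J3 g h χ) p v
      = (1/2) * (2 * p.1 0 * v.1 0 / I1 + 2 * p.1 1 * v.1 1 / I2
          + 2 * (p.1 2 - p.2.2.2) * (v.1 2 - v.2.2.2) / I3
          + 2 * p.2.2.2 * v.2.2.2 / J3)
        + g * h * (v.2.1 ⬝ᵥ χ) := by
  have hP : ∀ i : Fin 3, HasFDerivAt (fun q : EE => q.1 i) (cP i) p :=
    fun i => (cP i).hasFDerivAt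
  have hG : ∀ i : Fin 3, HasFDerivAt (fun q : EE => q.2.1 i) (cG i) p :=
    fun i => (cG i).hasFDerivAt
  have hL : HasFDerivAt (fun q : EE => q.2.2.2) cL p := cL.hasFDerivAt
  have hdot : HasFDerivAt (fun q : EE => q.2.1 ⬝ᵥ χ)
      (∑ i : Fin 3, χ i • cG i) p := by
    have h1 : (fun q : EE => q.2.1 ⬝ᵥ χ)
        = fun q : EE => ∑ i : Fin 3, (fun q : EE => q.2.1 i) q * χ i := by
      funext q; simp [dotProduct]
    rw [h1]
    exact HasFDerivAt.fun_sum (fun i _ => (hG i).mul_const (χ i))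
  have h3 : HasFDerivAt (fun q : EE => q.1 2 - q.2.2.2) (cP 2 - cL) p := (hP 2).sub hL
  have hsq : ∀ (f : EE → ℝ) (f' : EE →L[ℝ] ℝ), HasFDerivAt f f' p →
      HasFDerivAt (fun q => (f q)^2) ((2 * f p) • f') p := by
    intro f f' hf
    have h2 : ((2 * f p) • f') = f p • f' + f p • f' := by rw [two_mul, add_smul]
    have hfun : (fun q : EE => (f q)^2) = fun q => f q * f q := by funext q; ring
    rw [hfun, h2]; exact hf.mul hf
  have hHam := ((((((hsq _ _ (hP 0)).mul_const I1⁻¹).add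
      ((hsq _ _ (hP 1)).mul_const I2⁻¹)).add
      ((hsq _ _ h3).mul_const I3⁻¹)).add
      ((hsq _ _ hL).mul_const J3⁻¹)).const_mul (1/2:ℝ)).add (hdot.const_mul (g*h))
  have hHam' : HasFDerivAt (Ham I1 I2 I3 J3 g h χ) _ p := hHam
  rw [hHam'.fderiv]
  simp [cP, cG, cL, dotProduct, Fin.sum_univ_three, mul_comm, div_eq_mul_inv]
  ring

lemma clm_decomp (L : EE →L[ℝ] ℝ) (v w : Fin 3 → ℝ) (c d : ℝ) :
    L (v, w, c, d)
      = v 0 * L (Pi.single 0 1, 0, 0, 0) + v 1 * L (Pi.single 1 1, 0, 0, 0)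
        + v 2 * L (Pi.single 2 1, 0, 0, 0)
        + w 0 * L (0, Pi.single 0 1, 0, 0) + w 1 * L (0, Pi.single 1 1, 0, 0)
        + w 2 * L (0, Pi.single 2 1, 0, 0)
        + c * L (0, 0, 1, 0) + d * L (0, 0, 0, 1) := by
  have hv : (v, w, c, d)
      = v 0 • ((Pi.single 0 1 : Fin 3 → ℝ), (0:Fin 3 → ℝ), (0:ℝ), (0:ℝ))
        + v 1 • ((Pi.single 1 1 : Fin 3 → ℝ), 0, 0, 0)
        + v 2 • ((Pi.single 2 1 : Fin 3 → ℝ), 0, 0, 0)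
        + w 0 • ((0:Fin 3 → ℝ), (Pi.single 0 1 : Fin 3 → ℝ), 0, 0)
        + w 1 • ((0:Fin 3 → ℝ), (Pi.single 1 1 : Fin 3 → ℝ), 0, 0)
        + w 2 • ((0:Fin 3 → ℝ), (Pi.single 2 1 : Fin 3 → ℝ), 0, 0)
        + c • ((0:Fin 3 → ℝ), (0:Fin 3 → ℝ), (1:ℝ), (0:ℝ))
        + d • ((0:Fin 3 → ℝ), (0:Fin 3 → ℝ), (0:ℝ), (1:ℝ)) := by
    refine Prod.ext ?_ (Prod.ext ?_ (Prod.ext ?_ ?_)) <;>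
      simp [Prod.fst_add, Prod.snd_add] <;>
      · funext i; fin_cases i <;> simp [Pi.single_apply]
  rw [hv]
  simp only [map_add, ContinuousLinearMap.map_smul, smul_eq_mul]

/-- Along any solution of the reduced spacecraft–rotor equations with non-coincident
centers, every `C¹` function `F` evolves by `d/dt F = {F, H}₋`: the reduced
equations are Hamiltonian with respect to the minus heavy-top Lie–Poisson bracket. -/
theorem reduced_equations_hamiltonian_noncoincident
    (I1 I2 I3 J3 : ℝ) (hI1 : 0 < I1) (hI2 : 0 < I2) (hI3 : 0 < I3) (hJ3 : 0 < J3)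
    (g h : ℝ) (χ : Fin 3 → ℝ) (hχ : χ ⬝ᵥ χ = 1)
    (a b : ℝ) (P Γ : ℝ → Fin 3 → ℝ) (α l : ℝ → ℝ)
    (hP : ∀ t ∈ Set.Ioo a b,
      HasDerivAt P (crossProduct (P t) (Om I1 I2 I3 (P t) (l t))
        + (g * h) • crossProduct (Γ t) χ) t)
    (hΓ : ∀ t ∈ Set.Ioo a b,
      HasDerivAt Γ (crossProduct (Γ t) (Om I1 I2 I3 (P t) (l t))) t)
    (hα : ∀ t ∈ Set.Ioo a b,
      HasDerivAt α (-(P t 2 - l t) / I3 + l t / J3) t)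
    (hl : ∀ t ∈ Set.Ioo a b, HasDerivAt l 0 t) :
    ∀ F : (Fin 3 → ℝ) × (Fin 3 → ℝ) × ℝ × ℝ → ℝ, ContDiff ℝ 1 F →
      ∀ t ∈ Set.Ioo a b,
        HasDerivAt (fun s => F (P s, Γ s, α s, l s))
          (bracket F (Ham I1 I2 I3 J3 g h χ) (P t, Γ t, α t, l t)) t := by
  intro F hF t ht
  have hc : HasDerivAt (fun s => (P s, Γ s, α s, l s))
      (crossProduct (P t) (Om I1 I2 I3 (P t) (l t)) + (g * h) • crossProduct (Γ t) χ,
        crossProduct (Γ t) (Om I1 I2 I3 (P t) (l t)),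
        -(P t 2 - l t) / I3 + l t / J3, 0) t :=
    (hP t ht).prodMk ((hΓ t ht).prodMk ((hα t ht).prodMk (hl t ht)))
  have hFd : HasFDerivAt F (fderiv ℝ F (P t, Γ t, α t, l t)) (P t, Γ t, α t, l t) :=
    (hF.differentiable one_ne_zero (P t, Γ t, α t, l t)).hasFDerivAt
  have hcomp := hFd.comp_hasDerivAt t hc
  refine hcomp.congr_deriv ?_
  rw [clm_decomp]
  unfold bracket gradPi gradGamma dAlpha dEll
  simp only [fderiv_Ham_apply]
  simp [crossProduct, dotProduct, Fin.sum_univ_three, Om, Pi.single_apply,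
    Pi.add_apply, Pi.smul_apply, smul_eq_mul]
  ring
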